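/- Let Z be an n-dimensional supersolvable Zinbiel algebra whose maximal abelian subalgebras have dimension n−2 (so α(Z) = n−2). Then β(Z) = n−2 or β(Z) = n−3. -/

import Mathlib

variable {F : Type*} [Field F] {Z : Type*} [AddCommGroup Z] [Module F Z]

/-- `A` is a subalgebra of the algebra with multiplication `b`. -/
def IsSubalg (b : Z →ₗ[F] Z →ₗ[F] Z) (A : Submodule F Z) : Prop :=
  ∀ x ∈ A, ∀ y ∈ A, b x y ∈ A

/-- `A` is abelian: all products of elements of `A` vanish. -/
def IsAbelian (b : Z →ₗ[F] Z →ₗ[F] Z) (A : Submodule F Z) : Prop :=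
  ∀ x ∈ A, ∀ y ∈ A, b x y = 0

/-- `A` is a two-sided ideal. -/
def IsIdeal (b : Z →ₗ[F] Z →ₗ[F] Z) (A : Submodule F Z) : Prop :=
  ∀ z : Z, ∀ x ∈ A, b z x ∈ A ∧ b x z ∈ A

private lemma zinbielDecAux {A : Submodule F Z} {e w : Z} (h : w ∈ A ⊔ Submodule.span F {e}) :
    ∃ t : F, w - t • e ∈ A := by
  obtain ⟨c, hc, y, hy, hcy⟩ := Submodule.mem_sup.mp h
  obtain ⟨t, rfl⟩ := Submodule.mem_span_singleton.mp hy
  exact ⟨t, by rw [← hcy]; simpa using hc⟩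

private lemma zinbielSupSpanEq [FiniteDimensional F Z] {p q : Submodule F Z} {e : Z}
    (hle : p ≤ q) (he : e ∈ q) (hne : e ∉ p)
    (hrk : Module.finrank F q ≤ Module.finrank F p + 1) :
    q = p ⊔ Submodule.span F {e} := by
  have h1 : p ⊔ Submodule.span F {e} ≤ q :=
    sup_le hle ((Submodule.span_singleton_le_iff_mem e q).mpr he)
  have h2 : p < p ⊔ Submodule.span F {e} := by
    refine lt_of_le_of_ne le_sup_left (fun h => hne ?_)
    rw [h]
    exact Submodule.mem_sup_right (Submodule.mem_span_singleton_self e)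
  have h3 := Submodule.finrank_lt_finrank_of_lt h2
  exact (Submodule.eq_of_le_of_finrank_le h1 (by omega)).symm

private lemma zinbielCentral [FiniteDimensional F Z] (b : Z →ₗ[F] Z →ₗ[F] Z)
    (hZinbiel : ∀ x y z : Z, b (b x y) z = b x (b y z) + b x (b z y))
    (C : ℕ → Submodule F Z) (hC0 : C 0 = ⊥) (hCtop : C (Module.finrank F Z) = ⊤)
    (hmono : ∀ i, i < Module.finrank F Z → C i < C (i + 1))
    (hdim : ∀ i ≤ Module.finrank F Z, Module.finrank F (C i) = i)
    (hideal : ∀ i ≤ Module.finrank F Z, IsIdeal b (C i)) :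
    ∀ i, i < Module.finrank F Z → ∀ w ∈ C (i + 1), (∀ u, b u w ∈ C i) ∧ (∀ u, b w u ∈ C i) := by
  classical
  set n := Module.finrank F Z with hn
  have setup : ∀ i, i < n → ∃ e : Z, e ∈ C (i + 1) ∧ e ∉ C i ∧
      (∀ w ∈ C (i + 1), ∃ t : F, w - t • e ∈ C i) ∧ (∀ t : F, t • e ∈ C i → t = 0) := by
    intro i hi
    obtain ⟨e, he1, he2⟩ := SetLike.exists_of_lt (hmono i hi)
    have hsup : C (i + 1) = C i ⊔ Submodule.span F {e} := by
      apply zinbielSupSpanEq (le_of_lt (hmono i hi)) he1 he2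
      rw [hdim (i + 1) hi, hdim i (le_of_lt hi)]
    refine ⟨e, he1, he2, ?_, ?_⟩
    · intro w hw; exact zinbielDecAux (hsup ▸ hw)
    · intro t ht
      by_contra h
      exact he2 (by simpa [smul_smul, inv_mul_cancel₀ h] using Submodule.smul_mem (C i) t⁻¹ ht)
  have hL : ∀ i, i < n → ∀ w ∈ C (i + 1), ∀ u, b u w ∈ C i := by
    intro i hi
    obtain ⟨e, he1, he2, dec, uniq⟩ := setup i hi
    have hin : i ≤ n := le_of_lt hi
    have hi1n : i + 1 ≤ n := hi
    have hμex : ∀ u : Z, ∃ t : F, b u e - t • e ∈ C i := fun u => dec _ ((hideal (i + 1) hi1n u e he1).1)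
    choose μ hμ using hμex
    have hνex : ∀ u : Z, ∃ t : F, b e u - t • e ∈ C i := fun u => dec _ ((hideal (i + 1) hi1n u e he1).2)
    choose ν hν using hνex
    have hμ0 : ∀ u, μ u = 0 := by
      intro u
      have e1 : b (b u e) u - (μ u * ν u) • e ∈ C i := by
        have h1 : b (b u e - μ u • e) u ∈ C i := (hideal i hin u _ (hμ u)).2
        have h2 : μ u • (b e u - ν u • e) ∈ C i := Submodule.smul_mem _ _ (hν u)
        have heq : b (b u e) u - (μ u * ν u) • e
            = b (b u e - μ u • e) u + μ u • (b e u - ν u • e) := by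
          simp only [map_sub, map_smul, LinearMap.sub_apply, LinearMap.smul_apply]
          module
        rw [heq]; exact add_mem h1 h2
      have e2 : b u (b e u) - (ν u * μ u) • e ∈ C i := by
        have h1 : b u (b e u - ν u • e) ∈ C i := (hideal i hin u _ (hν u)).1
        have h2 : ν u • (b u e - μ u • e) ∈ C i := Submodule.smul_mem _ _ (hμ u)
        have heq : b u (b e u) - (ν u * μ u) • e
            = b u (b e u - ν u • e) + ν u • (b u e - μ u • e) := by
          simp only [map_sub, map_smul, LinearMap.sub_apply, LinearMap.smul_apply]
          module
        rw [heq]; exact add_mem h1 h2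
      have e3 : b u (b u e) - (μ u * μ u) • e ∈ C i := by
        have h1 : b u (b u e - μ u • e) ∈ C i := (hideal i hin u _ (hμ u)).1
        have h2 : μ u • (b u e - μ u • e) ∈ C i := Submodule.smul_mem _ _ (hμ u)
        have heq : b u (b u e) - (μ u * μ u) • e
            = b u (b u e - μ u • e) + μ u • (b u e - μ u • e) := by
          simp only [map_sub, map_smul, LinearMap.sub_apply, LinearMap.smul_apply]
          module
        rw [heq]; exact add_mem h1 h2
      have hmem : (μ u * ν u - ν u * μ u - μ u * μ u) • e ∈ C i := by
        have h := sub_mem (sub_mem e1 e2) e3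
        have heq : (b (b u e) u - (μ u * ν u) • e) - (b u (b e u) - (ν u * μ u) • e)
            - (b u (b u e) - (μ u * μ u) • e)
            = (ν u * μ u + μ u * μ u - μ u * ν u) • e := by
          rw [hZinbiel u e u]; module
        rw [heq] at h
        have : (μ u * ν u - ν u * μ u - μ u * μ u : F)
            = -(ν u * μ u + μ u * μ u - μ u * ν u) := by ring
        rw [this, neg_smul]
        exact neg_mem h
      have h0 := uniq _ hmem
      have : μ u * μ u = 0 := by linear_combination -h0
      exact mul_self_eq_zero.mp this
    intro w hw u
    obtain ⟨t, ht⟩ := dec w hw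
    have h1 : b u (w - t • e) ∈ C i := (hideal i hin u _ ht).1
    have h2 : b u e ∈ C i := by have h := hμ u; rw [hμ0 u] at h; simpa using h
    have heq : b u w = b u (w - t • e) + t • b u e := by
      simp only [map_sub, map_smul]; abel
    rw [heq]; exact add_mem h1 (Submodule.smul_mem _ _ h2)
  have hR : ∀ i, i < n → ∀ w ∈ C (i + 1), ∀ u, b w u ∈ C i := by
    intro i hi
    obtain ⟨e, he1, he2, dec, uniq⟩ := setup i hi
    have hin : i ≤ n := le_of_lt hi
    have hi1n : i + 1 ≤ n := hi
    have hνex : ∀ u : Z, ∃ t : F, b e u - t • e ∈ C i := fun u => dec _ ((hideal (i + 1) hi1n u e he1).2)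
    choose ν hν using hνex
    have hchar : ∀ u v : Z, ν (b u v) + ν (b v u) = ν u * ν v := by
      intro u v
      have e1 : b (b e u) v - (ν u * ν v) • e ∈ C i := by
        have h1 : b (b e u - ν u • e) v ∈ C i := (hideal i hin v _ (hν u)).2
        have h2 : ν u • (b e v - ν v • e) ∈ C i := Submodule.smul_mem _ _ (hν v)
        have heq : b (b e u) v - (ν u * ν v) • e
            = b (b e u - ν u • e) v + ν u • (b e v - ν v • e) := by
          simp only [map_sub, map_smul, LinearMap.sub_apply, LinearMap.smul_apply]
          module
        rw [heq]; exact add_mem h1 h2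
      have hmem : (ν u * ν v - ν (b u v) - ν (b v u)) • e ∈ C i := by
        have h := sub_mem (add_mem (hν (b u v)) (hν (b v u))) e1
        have heq : (b e (b u v) - ν (b u v) • e) + (b e (b v u) - ν (b v u) • e)
            - (b (b e u) v - (ν u * ν v) • e)
            = (ν u * ν v - ν (b u v) - ν (b v u)) • e := by
          rw [hZinbiel e u v]; module
        rw [heq] at h
        exact h
      have h0 := uniq _ hmem
      linear_combination -h0
    have hν0 : ∀ w, b e w ∈ C i → ν w = 0 := by
      intro w hw
      have h2 : ν w • e ∈ C i := by
        have h := Submodule.sub_mem _ hw (hν w)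
        simpa using h
      exact uniq _ h2
    have hνall : ∀ u, ν u = 0 := by
      intro u; by_contra hu
      set y : ℕ → Z := fun k => Nat.rec u (fun _ w => b w w) k with hy
      have hys : ∀ k, y (k + 1) = b (y k) (y k) := fun k => rfl
      have hyC : ∀ k, k ≤ n → y k ∈ C (n - k) := by
        intro k
        induction k with
        | zero =>
          intro _
          have hC : C (n - 0) = ⊤ := by simpa using hCtop
          rw [hC]; trivial
        | succ k ih =>
          intro hk1
          have hk : k ≤ n := Nat.le_of_succ_le hk1
          have h1 : y k ∈ C (n - k) := ih hk
          have h2 : n - k = (n - (k + 1)) + 1 := by omega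
          have h3 : n - (k + 1) < n := by omega
          rw [hys]
          exact hL (n - (k + 1)) h3 (y k) (h2 ▸ h1) (y k)
      have hyν : ∀ k, ν (y k) ≠ 0 := by
        intro k; induction k with
        | zero => exact hu
        | succ k ih =>
          intro h0
          have hc := hchar (y k) (y k)
          rw [← hys k, h0] at hc
          exact ih (mul_self_eq_zero.mp (by linear_combination -hc))
      have hyn : y n = 0 := by
        have h := hyC n le_rfl
        rw [Nat.sub_self, hC0] at h
        simpa using h
      have : ν (y n) = 0 := hν0 _ (by rw [hyn, map_zero]; exact Submodule.zero_mem (C i))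
      exact hyν n this
    intro w hw u
    obtain ⟨t, ht⟩ := dec w hw
    have h1 : b (w - t • e) u ∈ C i := (hideal i hin u _ ht).2
    have h2 : b e u ∈ C i := by have h := hν u; rw [hνall u] at h; simpa using h
    have heq : b w u = b (w - t • e) u + t • b e u := by
      simp only [map_sub, map_smul, LinearMap.sub_apply, LinearMap.smul_apply]; abel
    rw [heq]; exact add_mem h1 (Submodule.smul_mem _ _ h2)
  intro i hi w hw
  exact ⟨hL i hi w hw, hR i hi w hw⟩

private lemma zinbielAbsorb [FiniteDimensional F Z] (b : Z →ₗ[F] Z →ₗ[F] Z)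
    (C : ℕ → Submodule F Z) (hC0 : C 0 = ⊥) (hCtop : C (Module.finrank F Z) = ⊤)
    (hcent : ∀ i, i < Module.finrank F Z → ∀ w ∈ C (i + 1),
      (∀ u, b u w ∈ C i) ∧ (∀ u, b w u ∈ C i))
    {A W : Submodule F Z} (hAW : A ≤ W)
    (hWidl : ∀ u : Z, ∀ w ∈ W, b u w ∈ W ∧ b w u ∈ W)
    (habel : ∀ x ∈ A, ∀ y ∈ A, b x y = 0)
    (habsorb : W ≤ A ⊔ Submodule.span F {p | ∃ u ∈ W, ∃ v ∈ W, b u v = p}) :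
    W ≤ A := by
  set n := Module.finrank F Z with hn
  have main : ∀ j, j ≤ n → W ≤ A ⊔ (C (n - j) ⊓ W) := by
    intro j
    induction j with
    | zero =>
      intro _
      rw [Nat.sub_zero, hCtop, top_inf_eq]
      exact le_sup_right
    | succ j ih =>
      intro hj1
      have hj : j ≤ n := Nat.le_of_succ_le hj1
      have IH := ih hj
      have hm : n - j = (n - (j + 1)) + 1 := by omega
      have hmn : n - (j + 1) < n := by omega
      have hspan : Submodule.span F {p | ∃ u ∈ W, ∃ v ∈ W, b u v = p}
          ≤ A ⊔ (C (n - (j + 1)) ⊓ W) := by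
        rw [Submodule.span_le]
        rintro p ⟨u, hu, v, hv, rfl⟩
        have hu' := IH hu
        have hv' := IH hv
        rw [Submodule.mem_sup] at hu' hv'
        obtain ⟨a, ha, c, hc, rfl⟩ := hu'
        obtain ⟨a', ha', c', hc', rfl⟩ := hv'
        have hcC : c ∈ C ((n - (j + 1)) + 1) := by rw [← hm]; exact hc.1
        have hc'C : c' ∈ C ((n - (j + 1)) + 1) := by rw [← hm]; exact hc'.1
        have heq : b (a + c) (a' + c') = b a a' + (b a c' + b c a' + b c c') := by
          simp only [map_add, LinearMap.add_apply]; abel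
        rw [SetLike.mem_coe, heq, habel a ha a' ha', zero_add]
        have m1 : b a c' ∈ C (n - (j + 1)) ⊓ W :=
          ⟨(hcent _ hmn c' hc'C).1 a, (hWidl a c' hc'.2).1⟩
        have m2 : b c a' ∈ C (n - (j + 1)) ⊓ W :=
          ⟨(hcent _ hmn c hcC).2 a', (hWidl a' c hc.2).2⟩
        have m3 : b c c' ∈ C (n - (j + 1)) ⊓ W :=
          ⟨(hcent _ hmn c' hc'C).1 c, (hWidl c c' hc'.2).1⟩
        exact Submodule.mem_sup_right (add_mem (add_mem m1 m2) m3)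
      intro w hw
      have h := habsorb hw
      rw [Submodule.mem_sup] at h
      obtain ⟨a, ha, p, hp, rfl⟩ := h
      exact add_mem (Submodule.mem_sup_left ha) (hspan hp)
  have h := main n le_rfl
  rw [Nat.sub_self, hC0] at h
  simpa using h

/-- if `Z` is an `n`-dimensional supersolvable Zinbiel algebra with
`α(Z) = n - 2` (there is an abelian subalgebra of dimension `n-2`, and no abelian
subalgebra of larger dimension), then `β(Z) = n-2` or `β(Z) = n-3`, i.e. `Z` has an
abelian ideal of dimension `n-2` or `n-3`. -/
theorem stmt5 [FiniteDimensional F Z] (b : Z →ₗ[F] Z →ₗ[F] Z)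
    (hZinbiel : ∀ x y z : Z, b (b x y) z = b x (b y z) + b x (b z y))
    (C : ℕ → Submodule F Z) (hC0 : C 0 = ⊥) (hCtop : C (Module.finrank F Z) = ⊤)
    (hmono : ∀ i, i < Module.finrank F Z → C i < C (i + 1))
    (hdim : ∀ i ≤ Module.finrank F Z, Module.finrank F (C i) = i)
    (hideal : ∀ i ≤ Module.finrank F Z, IsIdeal b (C i))
    (A : Submodule F Z) (hsub : IsSubalg b A) (hab : IsAbelian b A)
    (hdimA : Module.finrank F A + 2 = Module.finrank F Z)
    (halpha : ∀ S : Submodule F Z, IsSubalg b S → IsAbelian b S →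
      Module.finrank F S ≤ Module.finrank F A) :
    ∃ B : Submodule F Z, IsIdeal b B ∧ IsAbelian b B ∧
      (Module.finrank F B + 2 = Module.finrank F Z ∨
       Module.finrank F B + 3 = Module.finrank F Z) := by
  classical
  set n := Module.finrank F Z with hn
  have hcent := zinbielCentral b hZinbiel C hC0 hCtop hmono hdim hideal
  set Zsq : Submodule F Z := Submodule.span F {p | ∃ u v : Z, b u v = p} with hZsqdef
  have hprod : ∀ u v : Z, b u v ∈ Zsq := fun u v => Submodule.subset_span ⟨u, v, rfl⟩
  by_cases hZA : Zsq ≤ A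
  · exact ⟨A, fun z x hx => ⟨hZA (hprod z x), hZA (hprod x z)⟩, hab, Or.inl hdimA⟩
  set K := A ⊔ Zsq with hKdef
  have hAK : A ≤ K := le_sup_left
  have hZK : Zsq ≤ K := le_sup_right
  have hprodK : ∀ u v : Z, b u v ∈ K := fun u v => hZK (hprod u v)
  have hAneK : A ≠ K := by
    intro h
    exact hZA (h.symm ▸ hZK)
  have hKneTop : K ≠ ⊤ := by
    intro htop
    have hzsp : Zsq ≤ Submodule.span F {p | ∃ u ∈ (⊤ : Submodule F Z), ∃ v ∈ (⊤ : Submodule F Z), b u v = p} := by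
      apply Submodule.span_mono
      rintro p ⟨u, v, h⟩
      exact ⟨u, trivial, v, trivial, h⟩
    have habs : (⊤ : Submodule F Z) ≤ A ⊔ Submodule.span F
        {p | ∃ u ∈ (⊤ : Submodule F Z), ∃ v ∈ (⊤ : Submodule F Z), b u v = p} := by
      calc (⊤ : Submodule F Z) = K := htop.symm
        _ ≤ A ⊔ _ := sup_le_sup_left hzsp A
    have hWi : ∀ u : Z, ∀ w ∈ (⊤ : Submodule F Z), b u w ∈ (⊤ : Submodule F Z) ∧ b w u ∈ (⊤ : Submodule F Z) :=
      fun u w _ => ⟨trivial, trivial⟩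
    have h := zinbielAbsorb b C hC0 hCtop hcent le_top hWi hab habs
    have hA_top : A = ⊤ := top_le_iff.mp h
    rw [hA_top, finrank_top] at hdimA
    omega
  have hKlt : K < ⊤ := lt_top_iff_ne_top.mpr hKneTop
  have hAltK : A < K := lt_of_le_of_ne hAK hAneK
  have hrkAK : Module.finrank F A < Module.finrank F K := Submodule.finrank_lt_finrank_of_lt hAltK
  have hrkK : Module.finrank F K < n := by
    have h := Submodule.finrank_lt_finrank_of_lt hKlt
    rwa [finrank_top] at h
  have hdK : Module.finrank F K + 1 = n := by omega
  -- K² ⊆ A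
  have hK2 : ∀ u ∈ K, ∀ v ∈ K, b u v ∈ A := by
    set L := A ⊔ Submodule.span F {p | ∃ u ∈ K, ∃ v ∈ K, b u v = p} with hLdef
    have hLK : L ≤ K := sup_le hAK (by
      rw [Submodule.span_le]
      rintro p ⟨u, hu, v, hv, rfl⟩
      exact hprodK u v)
    have hLneK : L ≠ K := by
      intro h
      have hKi : ∀ u : Z, ∀ w ∈ K, b u w ∈ K ∧ b w u ∈ K := fun u w _ => ⟨hprodK u w, hprodK w u⟩
      have := zinbielAbsorb b C hC0 hCtop hcent hAK hKi hab (le_of_eq h.symm)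
      exact hAltK.not_ge this
    have hLltK : L < K := lt_of_le_of_ne hLK hLneK
    have h1 : Module.finrank F L < Module.finrank F K := Submodule.finrank_lt_finrank_of_lt hLltK
    have h2 : Module.finrank F A ≤ Module.finrank F L := by
      have : A ≤ L := le_sup_left
      exact Submodule.finrank_mono this
    have hAL : A = L := Submodule.eq_of_le_of_finrank_le (le_sup_left : A ≤ L) (by omega)
    intro u hu v hv
    have : b u v ∈ L := by
      rw [hLdef]
      exact Submodule.mem_sup_right (Submodule.subset_span ⟨u, hu, v, hv, rfl⟩)
    rwa [← hAL] at this
  -- pick x outside K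
  obtain ⟨x, -, hxK⟩ := SetLike.exists_of_lt hKlt
  have htopKx : K ⊔ Submodule.span F {x} = ⊤ := by
    have hlt : K < K ⊔ Submodule.span F {x} := by
      refine lt_of_le_of_ne le_sup_left (fun h => hxK ?_)
      rw [h]
      exact Submodule.mem_sup_right (Submodule.mem_span_singleton_self x)
    have h1 := Submodule.finrank_lt_finrank_of_lt hlt
    refine Submodule.eq_of_le_of_finrank_le le_top ?_
    rw [finrank_top]
    omega
  have hiZ : ∀ z : Z, ∃ t : F, z - t • x ∈ K := by
    intro z
    exact zinbielDecAux (htopKx ▸ (Submodule.mem_top : z ∈ ⊤))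
  -- star lemma
  have hstar : (∀ k ∈ K, ∀ a ∈ A, b k a = 0) → ∀ a ∈ A, b x a + b a x ∈ A := by
    intro hKA a ha
    by_contra hs
    set s := b x a + b a x with hsdef
    have hsK : s ∈ K := add_mem (hprodK x a) (hprodK a x)
    have hZs : ∀ u : Z, b u s = 0 := by
      intro u
      have h := hZinbiel u x a
      have h2 : b u s = b (b u x) a := by
        rw [hsdef, map_add, h]
      rw [h2]
      exact hKA _ (hprodK u x) a ha
    have hSab : IsAbelian b (A ⊔ Submodule.span F {s}) := by
      intro p hp q hq
      obtain ⟨t, htp⟩ := zinbielDecAux hp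
      obtain ⟨r, htq⟩ := zinbielDecAux hq
      have hq1 : b (p - t • s) (q - r • s) = 0 := hab _ htp _ htq
      have hq2 : b (p - t • s) s = 0 := hZs _
      have hq3 : b s (q - r • s) = 0 := hKA s hsK _ htq
      have hq4 : b s s = 0 := hZs s
      have heq : b p q = b (p - t • s) (q - r • s) + r • b (p - t • s) s
          + t • b s (q - r • s) + (t * r) • b s s := by
        simp only [map_sub, map_smul, LinearMap.sub_apply, LinearMap.smul_apply]
        module
      rw [heq, hq1, hq2, hq3, hq4]
      simp
    have hSsub : IsSubalg b (A ⊔ Submodule.span F {s}) := by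
      intro p hp q hq
      rw [hSab p hp q hq]
      exact Submodule.zero_mem _
    have hle := halpha _ hSsub hSab
    have hlt : A < A ⊔ Submodule.span F {s} := by
      refine lt_of_le_of_ne le_sup_left (fun h => hs ?_)
      rw [h]
      exact Submodule.mem_sup_right (Submodule.mem_span_singleton_self s)
    have := Submodule.finrank_lt_finrank_of_lt hlt
    omega
  -- case analysis
  by_cases hxa : ∀ a ∈ A, b x a ∈ A
  · by_cases hax : ∀ a ∈ A, b a x ∈ A
    · -- A is an ideal
      refine ⟨A, ?_, hab, Or.inl hdimA⟩
      intro z a ha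
      obtain ⟨t, hz⟩ := hiZ z
      constructor
      · have heq : b z a = b (z - t • x) a + t • b x a := by
          simp only [map_sub, map_smul, LinearMap.sub_apply, LinearMap.smul_apply]; abel
        rw [heq]
        exact add_mem (hK2 _ hz a (hAK ha)) (Submodule.smul_mem _ _ (hxa a ha))
      · have heq : b a z = b a (z - t • x) + t • b a x := by
          simp only [map_sub, map_smul]; abel
        rw [heq]
        exact add_mem (hK2 a (hAK ha) _ hz) (Submodule.smul_mem _ _ (hax a ha))
    · -- impossible branch
      exfalso
      push_neg at hax
      obtain ⟨a₀, ha₀, hk₀⟩ := hax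
      set k₀ := b a₀ x with hk₀def
      have hk₀K : k₀ ∈ K := hprodK a₀ x
      have hsupK2 : K = A ⊔ Submodule.span F {k₀} := zinbielSupSpanEq hAK hk₀K hk₀ (by omega)
      have ha₀k₀ : b a₀ k₀ = 0 := by
        have h := hZinbiel a₀ a₀ x
        rw [hab a₀ ha₀ a₀ ha₀, map_zero, LinearMap.zero_apply] at h
        have h2 : b a₀ (b x a₀) = 0 := hab a₀ ha₀ _ (hxa a₀ ha₀)
        rw [h2, add_zero] at h
        exact h.symm
      have hKA : ∀ k ∈ K, ∀ a ∈ A, b k a = 0 := by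
        intro k hk a ha
        obtain ⟨t, htk⟩ := zinbielDecAux (hsupK2 ▸ hk)
        have hk₀a : b k₀ a = 0 := by
          have h := hZinbiel a₀ x a
          obtain ⟨s1, hs1⟩ := zinbielDecAux (hsupK2 ▸ (hprodK x a))
          obtain ⟨s2, hs2⟩ := zinbielDecAux (hsupK2 ▸ (hprodK a x))
          have h1 : b a₀ (b x a) = 0 := by
            have heq : b a₀ (b x a) = b a₀ (b x a - s1 • k₀) + s1 • b a₀ k₀ := by
              simp only [map_sub, map_smul]; abel
            rw [heq, hab a₀ ha₀ _ hs1, ha₀k₀]; simp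
          have h2 : b a₀ (b a x) = 0 := by
            have heq : b a₀ (b a x) = b a₀ (b a x - s2 • k₀) + s2 • b a₀ k₀ := by
              simp only [map_sub, map_smul]; abel
            rw [heq, hab a₀ ha₀ _ hs2, ha₀k₀]; simp
          rw [h1, h2] at h
          simpa using h
        have heq : b k a = b (k - t • k₀) a + t • b k₀ a := by
          simp only [map_sub, map_smul, LinearMap.sub_apply, LinearMap.smul_apply]; abel
        rw [heq, hab _ htk a ha, hk₀a]
        simp
      have hsx := hstar hKA a₀ ha₀
      have : b a₀ x ∈ A := by
        have h := Submodule.sub_mem A hsx (hxa a₀ ha₀)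
        simpa using h
      exact hk₀ this
  · -- main case II
    push_neg at hxa
    obtain ⟨a₁, ha₁, hxa₁⟩ := hxa
    set k₀ := b x a₁ with hk₀def
    have hk₀K : k₀ ∈ K := hprodK x a₁
    have hsupK : K = A ⊔ Submodule.span F {k₀} := zinbielSupSpanEq hAK hk₀K hxa₁ (by omega)
    have hKA : ∀ k ∈ K, ∀ a ∈ A, b k a = 0 := by
      intro k hk a ha
      obtain ⟨t, htk⟩ := zinbielDecAux (hsupK ▸ hk)
      have hk₀a : b k₀ a = 0 := by
        have h := hZinbiel x a₁ a
        rw [hab a₁ ha₁ a ha, hab a ha a₁ ha₁, map_zero, add_zero] at h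
        exact h
      have heq : b k a = b (k - t • k₀) a + t • b k₀ a := by
        simp only [map_sub, map_smul, LinearMap.sub_apply, LinearMap.smul_apply]; abel
      rw [heq, hab _ htk a ha, hk₀a]
      simp
    have hstar' := hstar hKA
    set B : Submodule F Z := A ⊓ Submodule.comap (b x) A with hBdef
    have hBA : B ≤ A := inf_le_left
    have hBintro : ∀ w, w ∈ A → b x w ∈ A → w ∈ B := by
      intro w h1 h2
      exact Submodule.mem_inf.mpr ⟨h1, Submodule.mem_comap.mpr h2⟩
    have hBel : ∀ w ∈ B, w ∈ A ∧ b x w ∈ A := by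
      intro w hw
      exact ⟨(Submodule.mem_inf.mp hw).1, Submodule.mem_comap.mp (Submodule.mem_inf.mp hw).2⟩
    have hF1 : ∀ a ∈ A, b (b x a) x = 0 := by
      intro a ha
      have h1 := hZinbiel x a x
      have h2 := hZinbiel x x a
      have h3 : b (b x x) a = 0 := hKA _ (hprodK x x) a ha
      rw [h2] at h3
      rw [h1, add_comm]
      exact h3
    have hF2 : ∀ a ∈ A, b x (b x a) + b x (b a x) = 0 := by
      intro a ha
      have h3 : b (b x x) a = 0 := hKA _ (hprodK x x) a ha
      rw [hZinbiel x x a] at h3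
      exact h3
    have hwxA : ∀ w ∈ B, b w x ∈ A := by
      intro w hw
      obtain ⟨hwA, hxwA⟩ := hBel w hw
      have h := Submodule.sub_mem A (hstar' w hwA) hxwA
      simpa using h
    have hxB : ∀ w ∈ B, b x w ∈ B := by
      intro w hw
      obtain ⟨hwA, hxwA⟩ := hBel w hw
      have hst := hstar' (b x w) hxwA
      rw [hF1 w hwA, add_zero] at hst
      exact hBintro _ hxwA hst
    have hBx : ∀ w ∈ B, b w x ∈ B := by
      intro w hw
      obtain ⟨hwA, hxwA⟩ := hBel w hw
      refine hBintro _ (hwxA w hw) ?_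
      have h := hF2 w hwA
      have h2 : b x (b w x) = -(b x (b x w)) := eq_neg_of_add_eq_zero_right h
      rw [h2]
      exact neg_mem (hBel _ (hxB w hw)).2
    have hBK : ∀ w ∈ B, ∀ k ∈ K, b w k ∈ B := by
      intro w hw k hk
      obtain ⟨hwA, hxwA⟩ := hBel w hw
      have hcA : b w k ∈ A := hK2 w (hAK hwA) k hk
      have hxc : b x (b w k) ∈ A := by
        have h := hZinbiel x w k
        have h0 : b k w = 0 := hKA k hk w hwA
        rw [h0, map_zero, add_zero] at h
        rw [← h]
        exact hK2 _ (hAK hxwA) k hk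
      exact hBintro _ hcA hxc
    have hBideal : IsIdeal b B := by
      intro z w hw
      obtain ⟨t, hz⟩ := hiZ z
      constructor
      · have h0 : b (z - t • x) w = 0 := hKA _ hz w (hBA hw)
        have heq : b z w = b (z - t • x) w + t • b x w := by
          simp only [map_sub, map_smul, LinearMap.sub_apply, LinearMap.smul_apply]; abel
        rw [heq, h0, zero_add]
        exact Submodule.smul_mem _ _ (hxB w hw)
      · have heq : b w z = b w (z - t • x) + t • b w x := by
          simp only [map_sub, map_smul]; abel
        rw [heq]
        exact add_mem (hBK w hw _ hz) (Submodule.smul_mem _ _ (hBx w hw))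
    have hBab : IsAbelian b B := fun p hp q hq => hab p (hBA hp) q (hBA hq)
    -- dimension count
    have ha₁ne : a₁ ≠ 0 := by
      intro h
      apply hxa₁
      rw [hk₀def, h, map_zero]
      exact Submodule.zero_mem A
    have ha₁nB : a₁ ∉ B := by
      intro h
      exact hxa₁ (hBel a₁ h).2
    have hBltA : B < A := lt_of_le_of_ne hBA (fun h => ha₁nB (h ▸ ha₁))
    have hALe : A ≤ B ⊔ Submodule.span F {a₁} := by
      intro a ha
      obtain ⟨t, ht⟩ := zinbielDecAux (hsupK ▸ (hprodK x a))
      have h1 : a - t • a₁ ∈ B := by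
        refine hBintro _ (sub_mem ha (Submodule.smul_mem _ _ ha₁)) ?_
        have heq : b x (a - t • a₁) = b x a - t • k₀ := by
          rw [hk₀def]; simp only [map_sub, map_smul]
        rw [heq]
        exact ht
      have heq : a = (a - t • a₁) + t • a₁ := by abel
      rw [heq]
      exact add_mem (Submodule.mem_sup_left h1)
        (Submodule.mem_sup_right (Submodule.smul_mem _ _ (Submodule.mem_span_singleton_self a₁)))
    have hAeq : A = B ⊔ Submodule.span F {a₁} := by
      refine le_antisymm hALe (sup_le hBA ?_)
      rw [Submodule.span_singleton_le_iff_mem]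
      exact ha₁
    have hrkB : Module.finrank F B + 3 = n := by
      have hsf := Submodule.finrank_sup_add_finrank_inf_eq B (Submodule.span F {a₁})
      have hsp1 : Module.finrank F (Submodule.span F {a₁}) = 1 := finrank_span_singleton ha₁ne
      have hBlt : Module.finrank F B < Module.finrank F A := Submodule.finrank_lt_finrank_of_lt hBltA
      have hAr : Module.finrank F A = Module.finrank F ↥(B ⊔ Submodule.span F {a₁}) := by
        rw [← hAeq]
      omega
    exact ⟨B, hBideal, hBab, Or.inr hrkB⟩
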